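/- arXiv:2407.09720 — 2 statements merged into one kernel-verified Lean document; each statement's English description precedes it below -/
import Mathlib

section
/- Let u, G be C² with bounded second derivatives on ℝⁿ and g_δ a symmetric nonnegative kernel supported in B(0, δ/2) with unit integral. For x in the deep interior of region 1 (B(x,δ/2) ⊂ region 1), the leading-order expansion τ_sfs(x) = ∫ (∇G(y) − ∇G(x))·((y−x)·∇(∇u)(x)) g_δ(x−y) dy + O(δ³) holds, where ∇(∇u)(x) is the Hessian of u at x and the error constant depends only on the C³ norms of G and u near x. -/
open MeasureTheory Metric

set_option maxHeartbeats 1000000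
set_option synthInstance.maxHeartbeats 400000

noncomputable def dualIso (n : ℕ) :
    (EuclideanSpace ℝ (Fin n) →L[ℝ] ℝ) ≃ₗᵢ[ℝ] EuclideanSpace ℝ (Fin n) where
  toFun p := (InnerProductSpace.toDual ℝ (EuclideanSpace ℝ (Fin n))).symm p
  invFun v := InnerProductSpace.toDual ℝ (EuclideanSpace ℝ (Fin n)) v
  map_add' p q := map_add _ p q
  map_smul' c p := by
    simpa using (InnerProductSpace.toDual ℝ (EuclideanSpace ℝ (Fin n))).symm.map_smulₛₗ c p
  left_inv p := (InnerProductSpace.toDual ℝ _).apply_symm_apply p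
  right_inv v := (InnerProductSpace.toDual ℝ _).symm_apply_apply v
  norm_map' p := (InnerProductSpace.toDual ℝ _).symm.norm_map p

lemma gradient_eq_dualIso {n : ℕ} (f : EuclideanSpace ℝ (Fin n) → ℝ) :
    gradient f = ⇑(dualIso n) ∘ fderiv ℝ f := rfl

lemma aux_int {n : ℕ} {V : Type*} [NormedAddCommGroup V] [NormedSpace ℝ V]
    {g : EuclideanSpace ℝ (Fin n) → ℝ} (hg : Integrable g) {δ : ℝ}
    (hsupp : ∀ y : EuclideanSpace ℝ (Fin n), δ / 2 ≤ ‖y‖ → g y = 0)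
    (x : EuclideanSpace ℝ (Fin n))
    {F : EuclideanSpace ℝ (Fin n) → V} (hF : Continuous F) :
    Integrable (fun y => g (x - y) • F y) := by
  obtain ⟨K, hK⟩ := (isCompact_closedBall x (δ / 2)).exists_bound_of_continuousOn hF.continuousOn
  have hg' : Integrable fun y => g (x - y) := hg.comp_sub_left x
  refine Integrable.mono' (hg'.norm.const_mul K)
    ((hg'.aestronglyMeasurable).smul hF.aestronglyMeasurable)
    (Filter.Eventually.of_forall fun y => ?_)
  rcases le_or_gt (δ / 2) ‖x - y‖ with h | h
  · simp [hsupp _ h]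
  · have hy : y ∈ closedBall x (δ / 2) := by
      rw [mem_closedBall, dist_comm, dist_eq_norm]; exact h.le
    calc ‖g (x - y) • F y‖ = ‖g (x - y)‖ * ‖F y‖ := norm_smul _ _
      _ ≤ ‖g (x - y)‖ * K := mul_le_mul_of_nonneg_left (hK y hy) (norm_nonneg _)
      _ = K * ‖g (x - y)‖ := mul_comm _ _

lemma aux_sym {n : ℕ} {g : EuclideanSpace ℝ (Fin n) → ℝ}
    (hsym : ∀ y, g (-y) = g y) (x : EuclideanSpace ℝ (Fin n)) :
    ∫ y, g (x - y) • (y - x) = (0 : EuclideanSpace ℝ (Fin n)) := by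
  have h := integral_sub_left_eq_self (fun y => g (x - y) • (y - x)) volume (x + x)
  have e : ∀ t : EuclideanSpace ℝ (Fin n),
      g (x - (x + x - t)) • (x + x - t - x) = -(g (x - t) • (t - x)) := by
    intro t
    have h1 : x - (x + x - t) = -(x - t) := by abel
    have h2 : x + x - t - x = -(t - x) := by abel
    rw [h1, h2, hsym, smul_neg]
  simp only [e, integral_neg] at h
  have h3 : (2 : ℝ) • (∫ y, g (x - y) • (y - x)) = 0 := by
    rw [two_smul]
    nth_rewrite 1 [← h]
    exact neg_add_cancel _
  rcases smul_eq_zero.mp h3 with h4 | h4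
  · norm_num at h4
  · exact h4

lemma aux_lip1 {n : ℕ} {f : EuclideanSpace ℝ (Fin n) → ℝ} (hf : ContDiff ℝ 3 f) {M : ℝ}
    (hb2 : ∀ w, ‖iteratedFDeriv ℝ 2 f w‖ ≤ M) (y z : EuclideanSpace ℝ (Fin n)) :
    ‖gradient f y - gradient f z‖ ≤ M * ‖y - z‖ := by
  have hgr : ∀ w, gradient f w = dualIso n (fderiv ℝ f w) := fun w => rfl
  rw [hgr, hgr, ← LinearIsometryEquiv.map_sub, LinearIsometryEquiv.norm_map]
  have hdiff : Differentiable ℝ (fderiv ℝ f) :=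
    (hf.fderiv_right (m := 2) (by norm_num)).differentiable (by norm_num)
  have hbd : ∀ w : EuclideanSpace ℝ (Fin n), ‖fderiv ℝ (fderiv ℝ f) w‖ ≤ M := by
    intro w
    calc ‖fderiv ℝ (fderiv ℝ f) w‖ = ‖iteratedFDeriv ℝ 0 (fderiv ℝ (fderiv ℝ f)) w‖ :=
          by rw [norm_iteratedFDeriv_zero]
      _ = ‖iteratedFDeriv ℝ 1 (fderiv ℝ f) w‖ := norm_iteratedFDeriv_fderiv
      _ = ‖iteratedFDeriv ℝ 2 f w‖ := norm_iteratedFDeriv_fderiv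
      _ ≤ M := hb2 w
  exact convex_univ.norm_image_sub_le_of_norm_fderiv_le
    (fun w _ => hdiff w) (fun w _ => hbd w) trivial trivial

lemma aux_lip3 {E H : Type*} [NormedAddCommGroup E] [NormedSpace ℝ E]
    [NormedAddCommGroup H] [NormedSpace ℝ H] {h : E → H} (hh : ContDiff ℝ 2 h) {M : ℝ}
    (hb : ∀ w, ‖iteratedFDeriv ℝ 2 h w‖ ≤ M) (y z : E) :
    ‖fderiv ℝ h y - fderiv ℝ h z‖ ≤ M * ‖y - z‖ := by
  have hA : ∀ w, ‖fderiv ℝ (fderiv ℝ h) w‖ ≤ M := by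
    intro w
    calc ‖fderiv ℝ (fderiv ℝ h) w‖
        = ‖iteratedFDeriv ℝ 0 (fderiv ℝ (fderiv ℝ h)) w‖ :=
          by rw [norm_iteratedFDeriv_zero]
      _ = ‖iteratedFDeriv ℝ 1 (fderiv ℝ h) w‖ := norm_iteratedFDeriv_fderiv
      _ = ‖iteratedFDeriv ℝ 2 h w‖ := norm_iteratedFDeriv_fderiv
      _ ≤ M := hb w
  have hdiff : Differentiable ℝ (fderiv ℝ h) :=
    (hh.fderiv_right (m := 1) (by norm_num)).differentiable (by norm_num)
  exact convex_univ.norm_image_sub_le_of_norm_fderiv_le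
      (fun w _ => hdiff w) (fun w _ => hA w) trivial trivial

lemma aux_lip2 {n : ℕ} {f : EuclideanSpace ℝ (Fin n) → ℝ} (hf : ContDiff ℝ 3 f) {M : ℝ}
    (hb3 : ∀ w, ‖iteratedFDeriv ℝ 3 f w‖ ≤ M) (y z : EuclideanSpace ℝ (Fin n)) :
    ‖fderiv ℝ (gradient f) y - fderiv ℝ (gradient f) z‖ ≤ M * ‖y - z‖ := by
  have hcd2 : ContDiff ℝ 2 (fderiv ℝ f) := hf.fderiv_right (m := 2) (by norm_num)
  have hfd : ∀ w, fderiv ℝ (gradient f) w =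
      ((dualIso n) : (EuclideanSpace ℝ (Fin n) →L[ℝ] ℝ) →L[ℝ]
        EuclideanSpace ℝ (Fin n)).comp (fderiv ℝ (fderiv ℝ f) w) := by
    intro w
    rw [gradient_eq_dualIso]
    exact (dualIso n).comp_fderiv
  have hnorm_le : ‖((dualIso n) : (EuclideanSpace ℝ (Fin n) →L[ℝ] ℝ) →L[ℝ]
      EuclideanSpace ℝ (Fin n))‖ ≤ 1 := by
    refine ContinuousLinearMap.opNorm_le_bound _ zero_le_one fun v => ?_
    rw [one_mul]
    exact le_of_eq ((dualIso n).norm_map v)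
  have hAlip : ‖fderiv ℝ (fderiv ℝ f) y - fderiv ℝ (fderiv ℝ f) z‖ ≤ M * ‖y - z‖ :=
    aux_lip3 hcd2 (fun w => (norm_iteratedFDeriv_fderiv).trans_le (hb3 w)) y z
  calc ‖fderiv ℝ (gradient f) y - fderiv ℝ (gradient f) z‖
      = ‖((dualIso n) : (EuclideanSpace ℝ (Fin n) →L[ℝ] ℝ) →L[ℝ]
          EuclideanSpace ℝ (Fin n)).comp
          (fderiv ℝ (fderiv ℝ f) y - fderiv ℝ (fderiv ℝ f) z)‖ := by
        rw [hfd, hfd, ContinuousLinearMap.comp_sub]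
    _ ≤ ‖((dualIso n) : (EuclideanSpace ℝ (Fin n) →L[ℝ] ℝ) →L[ℝ]
          EuclideanSpace ℝ (Fin n))‖ * ‖fderiv ℝ (fderiv ℝ f) y - fderiv ℝ (fderiv ℝ f) z‖ :=
        ContinuousLinearMap.opNorm_comp_le _ _
    _ ≤ 1 * (M * ‖y - z‖) :=
        mul_le_mul hnorm_le hAlip (ContinuousLinearMap.opNorm_nonneg _) zero_le_one
    _ = M * ‖y - z‖ := one_mul _


/-- Taylor-expansion characterization of the sub-filter scale term: for `G, u` of
class `C³` with bounded second and third derivatives and `x` in the deep interior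
of region 1 (`B(x, δ/2) ⊆ Ω₁`, so filtered fields are plain convolutions), there
is a constant `C` depending only on the bounds, with
`|τ_sfs(x) − ∫ (∇G(y) − ∇G(x))·((y−x)·∇(∇u)(x)) g_δ(x−y) dy| ≤ C δ³`. -/
theorem stmt17 {n : ℕ}
    (G u : EuclideanSpace ℝ (Fin n) → ℝ)
    (hG : ContDiff ℝ 3 G) (hu : ContDiff ℝ 3 u)
    (M : ℝ)
    (hbG : ∀ x, ‖iteratedFDeriv ℝ 2 G x‖ ≤ M ∧ ‖iteratedFDeriv ℝ 3 G x‖ ≤ M)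
    (hbu : ∀ x, ‖iteratedFDeriv ℝ 2 u x‖ ≤ M ∧ ‖iteratedFDeriv ℝ 3 u x‖ ≤ M)
    (Ω₁ : Set (EuclideanSpace ℝ (Fin n))) :
    ∃ C : ℝ, ∀ δ : ℝ, 0 < δ →
      ∀ gδ : EuclideanSpace ℝ (Fin n) → ℝ, Integrable gδ →
        (∀ y, 0 ≤ gδ y) → (∀ y, gδ (-y) = gδ y) →
        (∀ y : EuclideanSpace ℝ (Fin n), δ / 2 ≤ ‖y‖ → gδ y = 0) →
        (∫ y, gδ y = 1) →
        ∀ x : EuclideanSpace ℝ (Fin n), closedBall x (δ / 2) ⊆ Ω₁ →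
          |((∫ y, (inner ℝ (gradient G y) (gradient u y) : ℝ) * gδ (x - y)) -
              (inner ℝ (∫ y, gδ (x - y) • gradient G y)
                (∫ y, gδ (x - y) • gradient u y) : ℝ)) -
            ∫ y, (inner ℝ (gradient G y - gradient G x)
                ((fderiv ℝ (gradient u) x) (y - x)) : ℝ) * gδ (x - y)| ≤
          C * δ ^ 3 := by
  refine ⟨M ^ 2, ?_⟩
  intro δ hδ gδ hgi hg0 hgsym hgsupp hgint x _hΩ
  have hM0 : 0 ≤ M := le_trans (norm_nonneg _) (hbG x).1
  set a := gradient G with ha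
  set b := gradient u with hb
  set B := fderiv ℝ b x with hB
  set R : EuclideanSpace ℝ (Fin n) → EuclideanSpace ℝ (Fin n) :=
    fun y => b y - b x - B (y - x) with hR
  have hRy : ∀ y, R y = b y - b x - B (y - x) := fun _ => rfl
  -- continuity
  have hca : Continuous a := by
    rw [ha, gradient_eq_dualIso]
    exact (dualIso n).continuous.comp (hG.continuous_fderiv (by norm_num))
  have hcb : Continuous b := by
    rw [hb, gradient_eq_dualIso]
    exact (dualIso n).continuous.comp (hu.continuous_fderiv (by norm_num))
  have hcB : Continuous fun y : EuclideanSpace ℝ (Fin n) => B (y - x) :=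
    B.continuous.comp (continuous_id.sub continuous_const)
  have hcR : Continuous R := (hcb.sub continuous_const).sub hcB
  have hcyx : Continuous fun y : EuclideanSpace ℝ (Fin n) => y - x :=
    continuous_id.sub continuous_const
  -- basic integrability facts
  have hg'i : Integrable fun y => gδ (x - y) := hgi.comp_sub_left x
  have hg'1 : (∫ y, gδ (x - y)) = 1 := by
    rw [integral_sub_left_eq_self gδ volume x]; exact hgint
  have hMulInt : ∀ f : EuclideanSpace ℝ (Fin n) → ℝ, Continuous f →
      Integrable fun y => f y * gδ (x - y) := by
    intro f hf
    exact (aux_int hgi hgsupp x hf).congr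
      (Filter.Eventually.of_forall fun y => by simp [smul_eq_mul, mul_comm])
  set ma := ∫ y, gδ (x - y) • a y with hma
  set mb := ∫ y, gδ (x - y) • b y with hmb
  have hi1 : Integrable fun y => (inner ℝ (a y) (b y) : ℝ) * gδ (x - y) :=
    hMulInt _ (hca.inner hcb)
  have hi2 : Integrable fun y => (inner ℝ (a y) (b x) : ℝ) * gδ (x - y) :=
    hMulInt _ (hca.inner continuous_const)
  have hi3 : Integrable fun y => (inner ℝ (a y) (B (y - x)) : ℝ) * gδ (x - y) :=
    hMulInt _ (hca.inner hcB)
  have hi4 : Integrable fun y => (inner ℝ (a y) (R y) : ℝ) * gδ (x - y) :=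
    hMulInt _ (hca.inner hcR)
  have hi5 : Integrable fun y => (inner ℝ (a x) (B (y - x)) : ℝ) * gδ (x - y) :=
    hMulInt _ (continuous_const.inner hcB)
  have hi6 : Integrable fun y => (inner ℝ ma (R y) : ℝ) * gδ (x - y) :=
    hMulInt _ (continuous_const.inner hcR)
  have hbsplit : ∀ y, b y = b x + B (y - x) + R y := by
    intro y; rw [hRy]; abel
  -- Step A
  have h2 : (∫ y, (inner ℝ (a y) (b x) : ℝ) * gδ (x - y)) = (inner ℝ ma (b x) : ℝ) := by
    have e : ∀ y, (inner ℝ (a y) (b x) : ℝ) * gδ (x - y)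
        = (inner ℝ (b x) (gδ (x - y) • a y) : ℝ) := by
      intro y; rw [real_inner_smul_right, real_inner_comm]; ring
    simp_rw [e]
    rw [integral_inner (aux_int hgi hgsupp x hca) (b x), ← hma, real_inner_comm]
  have stepA : (∫ y, (inner ℝ (a y) (b y) : ℝ) * gδ (x - y))
      = (inner ℝ ma (b x) : ℝ) + (∫ y, (inner ℝ (a y) (B (y - x)) : ℝ) * gδ (x - y))
        + ∫ y, (inner ℝ (a y) (R y) : ℝ) * gδ (x - y) := by
    have e : ∀ y, (inner ℝ (a y) (b y) : ℝ) * gδ (x - y)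
        = (inner ℝ (a y) (b x) : ℝ) * gδ (x - y) + (inner ℝ (a y) (B (y - x)) : ℝ) * gδ (x - y)
          + (inner ℝ (a y) (R y) : ℝ) * gδ (x - y) := by
      intro y
      rw [← add_mul, ← add_mul, ← inner_add_right, ← inner_add_right, ← hbsplit y]
    simp_rw [e]
    have hi23 : Integrable (fun y => (inner ℝ (a y) (b x) : ℝ) * gδ (x - y)
        + (inner ℝ (a y) (B (y - x)) : ℝ) * gδ (x - y)) volume := hi2.add hi3
    rw [integral_add hi23 hi4, integral_add hi2 hi3, h2]
  -- Step B
  have hzero : (∫ y, gδ (x - y) • (y - x)) = 0 := aux_sym hgsym x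
  have hB0 : (∫ y, gδ (x - y) • (B (y - x))) = 0 := by
    have e : ∀ y, gδ (x - y) • (B (y - x)) = B (gδ (x - y) • (y - x)) :=
      fun y => (B.map_smul _ _).symm
    simp_rw [e]
    rw [ContinuousLinearMap.integral_comp_comm B (aux_int hgi hgsupp x hcyx), hzero, map_zero]
  -- Step C
  have stepC : mb = b x + ∫ y, gδ (x - y) • R y := by
    have e : ∀ y, gδ (x - y) • b y
        = gδ (x - y) • (b x) + gδ (x - y) • (B (y - x)) + gδ (x - y) • R y := by
      intro y
      rw [← smul_add, ← smul_add, ← hbsplit y]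
    rw [hmb]
    simp_rw [e]
    have j1 : Integrable (fun y => gδ (x - y) • (b x)) volume :=
      aux_int hgi hgsupp x continuous_const
    have j2 : Integrable (fun y => gδ (x - y) • (B (y - x))) volume :=
      aux_int hgi hgsupp x hcB
    have j3 : Integrable (fun y => gδ (x - y) • R y) volume :=
      aux_int hgi hgsupp x hcR
    have j12 : Integrable (fun y => gδ (x - y) • (b x) + gδ (x - y) • (B (y - x))) volume :=
      j1.add j2
    rw [integral_add j12 j3, integral_add j1 j2,
      integral_smul_const, hg'1, one_smul, hB0, add_zero]
  -- Step D
  have stepD : (inner ℝ ma mb : ℝ)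
      = (inner ℝ ma (b x) : ℝ) + ∫ y, (inner ℝ ma (R y) : ℝ) * gδ (x - y) := by
    rw [stepC, inner_add_right]
    congr 1
    rw [← integral_inner (aux_int hgi hgsupp x hcR) ma]
    congr 1
    funext y
    rw [real_inner_smul_right, mul_comm]
  -- Step E
  have hi5zero : (∫ y, (inner ℝ (a x) (B (y - x)) : ℝ) * gδ (x - y)) = 0 := by
    have e : ∀ y, (inner ℝ (a x) (B (y - x)) : ℝ) * gδ (x - y)
        = (inner ℝ (a x) (gδ (x - y) • (B (y - x))) : ℝ) := by
      intro y; rw [real_inner_smul_right]; ring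
    simp_rw [e]
    rw [integral_inner (aux_int hgi hgsupp x hcB) (a x), hB0, inner_zero_right]
  have stepE : (∫ y, (inner ℝ (a y - a x) (B (y - x)) : ℝ) * gδ (x - y))
      = ∫ y, (inner ℝ (a y) (B (y - x)) : ℝ) * gδ (x - y) := by
    have e : ∀ y, (inner ℝ (a y - a x) (B (y - x)) : ℝ) * gδ (x - y)
        = (inner ℝ (a y) (B (y - x)) : ℝ) * gδ (x - y)
          - (inner ℝ (a x) (B (y - x)) : ℝ) * gδ (x - y) := by
      intro y; rw [inner_sub_left, sub_mul]
    simp_rw [e]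
    rw [integral_sub hi3 hi5, hi5zero, sub_zero]
  -- key identity
  have key : ((∫ y, (inner ℝ (a y) (b y) : ℝ) * gδ (x - y)) - (inner ℝ ma mb : ℝ))
      - (∫ y, (inner ℝ (a y - a x) (B (y - x)) : ℝ) * gδ (x - y))
      = ∫ y, (inner ℝ (a y - ma) (R y) : ℝ) * gδ (x - y) := by
    rw [stepA, stepD, stepE]
    have e : ∀ y, (inner ℝ (a y - ma) (R y) : ℝ) * gδ (x - y)
        = (inner ℝ (a y) (R y) : ℝ) * gδ (x - y) - (inner ℝ ma (R y) : ℝ) * gδ (x - y) := by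
      intro y; rw [inner_sub_left, sub_mul]
    simp_rw [e]
    rw [integral_sub hi4 hi6]
    ring
  rw [key]
  -- bounds
  have hsmall : ∀ y : EuclideanSpace ℝ (Fin n), gδ (x - y) ≠ 0 → ‖y - x‖ ≤ δ / 2 := by
    intro y hne
    by_contra hy
    push_neg at hy
    exact hne (hgsupp _ (by rw [norm_sub_rev]; exact hy.le))
  have haLip : ∀ y z, ‖a y - a z‖ ≤ M * ‖y - z‖ :=
    fun y z => aux_lip1 hG (fun w => (hbG w).1) y z
  -- remainder bound
  have hdiffb : Differentiable ℝ b := by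
    rw [hb, gradient_eq_dualIso]
    intro w
    exact ((dualIso n).toLinearIsometry.toContinuousLinearMap.differentiable.comp
      ((hu.fderiv_right (m := 2) (by norm_num)).differentiable (by norm_num))) w
  have hRbound : ∀ y, ‖y - x‖ ≤ δ / 2 → ‖R y‖ ≤ M * (δ / 2) * ‖y - x‖ := by
    intro y hy
    have hmem : y ∈ closedBall x (δ / 2) := by
      rw [mem_closedBall, dist_eq_norm]; exact hy
    have hxmem : x ∈ closedBall x (δ / 2) :=
      mem_closedBall_self (by positivity)
    have hder : ∀ z ∈ closedBall x (δ / 2),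
        HasFDerivWithinAt (fun w => b w - (B w - B x)) (fderiv ℝ b z - B)
          (closedBall x (δ / 2)) z := by
      intro z _
      exact (((hdiffb z).hasFDerivAt).sub (B.hasFDerivAt.sub_const (B x))).hasFDerivWithinAt
    have hbound : ∀ z ∈ closedBall x (δ / 2), ‖fderiv ℝ b z - B‖ ≤ M * (δ / 2) := by
      intro z hz
      have h1 : ‖fderiv ℝ b z - fderiv ℝ b x‖ ≤ M * ‖z - x‖ :=
        aux_lip2 hu (fun w => (hbu w).2) z x
      have h2 : ‖z - x‖ ≤ δ / 2 := by
        rw [← dist_eq_norm]; exact mem_closedBall.mp hz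
      calc ‖fderiv ℝ b z - B‖ = ‖fderiv ℝ b z - fderiv ℝ b x‖ := by rw [hB]
        _ ≤ M * ‖z - x‖ := h1
        _ ≤ M * (δ / 2) := by
            exact mul_le_mul_of_nonneg_left h2 hM0
    have := (convex_closedBall x (δ / 2)).norm_image_sub_le_of_norm_hasFDerivWithin_le
      hder hbound hxmem hmem
    have eq1 : (fun w => b w - (B w - B x)) y - (fun w => b w - (B w - B x)) x = R y := by
      simp only [hRy, B.map_sub]
      abel
    rwa [eq1] at this
  -- distance of ma from a x
  have hma_close : ‖ma - a x‖ ≤ M * (δ / 2) := by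
    have h1 : ma - a x = ∫ y, gδ (x - y) • (a y - a x) := by
      have e : ∀ y, gδ (x - y) • (a y - a x)
          = gδ (x - y) • a y - gδ (x - y) • (a x) := fun y => smul_sub _ _ _
      rw [eq_comm]
      simp_rw [e]
      rw [integral_sub (aux_int hgi hgsupp x hca)
        (aux_int hgi hgsupp x (continuous_const (y := a x))),
        integral_smul_const, hg'1, one_smul, ← hma]
    rw [h1]
    have hbnd : ∀ y, ‖gδ (x - y) • (a y - a x)‖ ≤ M * (δ / 2) * gδ (x - y) := by
      intro y
      rcases eq_or_ne (gδ (x - y)) 0 with h | h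
      · simp [h]
      · have hyx := hsmall y h
        have h3 : ‖a y - a x‖ ≤ M * (δ / 2) :=
          le_trans (haLip y x) (mul_le_mul_of_nonneg_left hyx hM0)
        calc ‖gδ (x - y) • (a y - a x)‖ = ‖gδ (x - y)‖ * ‖a y - a x‖ := norm_smul _ _
          _ = gδ (x - y) * ‖a y - a x‖ := by rw [Real.norm_eq_abs, abs_of_nonneg (hg0 _)]
          _ ≤ gδ (x - y) * (M * (δ / 2)) :=
              mul_le_mul_of_nonneg_left h3 (hg0 _)
          _ = M * (δ / 2) * gδ (x - y) := by ring
    calc ‖∫ y, gδ (x - y) • (a y - a x)‖ ≤ ∫ y, M * (δ / 2) * gδ (x - y) :=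
          norm_integral_le_of_norm_le (hg'i.const_mul _) (Filter.Eventually.of_forall hbnd)
      _ = M * (δ / 2) * ∫ y, gδ (x - y) := integral_const_mul _ _
      _ = M * (δ / 2) := by rw [hg'1, mul_one]
  -- final pointwise bound
  set c : ℝ := (M * δ) * (M * (δ / 2) * (δ / 2)) with hc
  have hc0 : 0 ≤ c := by positivity
  have hptbnd : ∀ y, ‖(inner ℝ (a y - ma) (R y) : ℝ) * gδ (x - y)‖ ≤ c * gδ (x - y) := by
    intro y
    rcases eq_or_ne (gδ (x - y)) 0 with h | h
    · rw [h, mul_zero, mul_zero, norm_zero]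
    · have hyx := hsmall y h
      have hA : ‖a y - ma‖ ≤ M * δ := by
        calc ‖a y - ma‖ = ‖(a y - a x) + (a x - ma)‖ := by rw [sub_add_sub_cancel]
          _ ≤ ‖a y - a x‖ + ‖a x - ma‖ := norm_add_le _ _
          _ ≤ M * (δ / 2) + M * (δ / 2) := by
              refine add_le_add (le_trans (haLip y x)
                (mul_le_mul_of_nonneg_left hyx hM0)) ?_
              rw [norm_sub_rev]; exact hma_close
          _ = M * δ := by ring
      have hRb : ‖R y‖ ≤ M * (δ / 2) * (δ / 2) :=
        le_trans (hRbound y hyx) (mul_le_mul_of_nonneg_left hyx (by positivity))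
      have hin : |(inner ℝ (a y - ma) (R y) : ℝ)| ≤ c := by
        rw [hc]
        exact le_trans (abs_real_inner_le_norm _ _)
          (mul_le_mul hA hRb (norm_nonneg _) (by positivity))
      calc ‖(inner ℝ (a y - ma) (R y) : ℝ) * gδ (x - y)‖
          = |(inner ℝ (a y - ma) (R y) : ℝ)| * gδ (x - y) := by
            rw [Real.norm_eq_abs, abs_mul, abs_of_nonneg (hg0 _)]
        _ ≤ c * gδ (x - y) := mul_le_mul_of_nonneg_right hin (hg0 _)
  calc |∫ y, (inner ℝ (a y - ma) (R y) : ℝ) * gδ (x - y)|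
      ≤ ∫ y, c * gδ (x - y) :=
        norm_integral_le_of_norm_le (hg'i.const_mul _) (Filter.Eventually.of_forall hptbnd)
    _ = c := by rw [integral_const_mul, hg'1, mul_one]
    _ ≤ M ^ 2 * δ ^ 3 := by rw [hc]; nlinarith [hM0, hδ.le, sq_nonneg M, sq_nonneg δ]
end

section
/- For the filtered volume fraction of the disk complement: with region 1 = {p ∈ ℝ² : ‖p − c‖ > R} and g_δ a radial nonnegative kernel supported in B(0,δ/2) with unit integral and δ/2 < R, the function α_δ(p) depends only on ‖p − c‖, is nondecreasing in ‖p − c‖, equals 0 for ‖p − c‖ ≤ R − δ/2, and equals 1 for ‖p − c‖ ≥ R + δ/2. -/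
open MeasureTheory

/-- Filtered volume fraction of the disk complement: with region 1
`{p : ‖p − c‖ > R}` and a radial nonnegative kernel `g_δ` supported in
`B(0, δ/2)` with unit integral and `δ/2 < R`, the volume fraction
`α_δ(p) = ∫_{‖y−c‖>R} g_δ(p−y) dy` depends only on `‖p − c‖`, is nondecreasing in
`‖p − c‖`, equals `0` for `‖p − c‖ ≤ R − δ/2`, and equals `1` for
`‖p − c‖ ≥ R + δ/2`. -/
theorem stmt19 (c : EuclideanSpace ℝ (Fin 2)) (R δ : ℝ)
    (hR : 0 < R) (hδ0 : 0 < δ) (hδ : δ < 2 * R)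
    (gδ : EuclideanSpace ℝ (Fin 2) → ℝ) (hgi : Integrable gδ)
    (h : ℝ → ℝ) (hh0 : ∀ s, 0 ≤ h s)
    (hrad : ∀ y, gδ y = h ‖y‖)
    (hsupp : ∀ y : EuclideanSpace ℝ (Fin 2), δ / 2 ≤ ‖y‖ → gδ y = 0)
    (hg1 : ∫ y, gδ y = 1)
    (α : EuclideanSpace ℝ (Fin 2) → ℝ)
    (hα : ∀ p, α p = ∫ y in {y : EuclideanSpace ℝ (Fin 2) | R < ‖y - c‖}, gδ (p - y)) :
    (∀ p q, ‖p - c‖ = ‖q - c‖ → α p = α q) ∧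
      (∀ p q, ‖p - c‖ ≤ ‖q - c‖ → α p ≤ α q) ∧
      (∀ p, ‖p - c‖ ≤ R - δ / 2 → α p = 0) ∧
      (∀ p, R + δ / 2 ≤ ‖p - c‖ → α p = 1) := by
  have hRδ : δ / 2 < R := by linarith
  set F : EuclideanSpace ℝ (Fin 2) → EuclideanSpace ℝ (Fin 2) → ℝ := fun d => Set.indicator {z : EuclideanSpace ℝ (Fin 2) | R < ‖d - z‖} gδ with hF
  have hmeasS : ∀ d : EuclideanSpace ℝ (Fin 2), MeasurableSet {z : EuclideanSpace ℝ (Fin 2) | R < ‖d - z‖} := fun d =>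
    measurableSet_lt measurable_const ((continuous_const.sub continuous_id).norm.measurable)
  have hFint : ∀ d : EuclideanSpace ℝ (Fin 2), Integrable (F d) := fun d => hgi.indicator (hmeasS d)
  -- rewrite α as an integral of F (p - c)
  have hβ : ∀ p, α p = ∫ z, F (p - c) z := by
    intro p
    have hS : MeasurableSet {y : EuclideanSpace ℝ (Fin 2) | R < ‖y - c‖} :=
      measurableSet_lt measurable_const ((continuous_id.sub continuous_const).norm.measurable)
    rw [hα p, ← integral_indicator hS]
    have heq : ∀ y : EuclideanSpace ℝ (Fin 2), Set.indicator {y : EuclideanSpace ℝ (Fin 2) | R < ‖y - c‖} (fun y => gδ (p - y)) y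
        = F (p - c) (p - y) := by
      intro y
      have hyc : p - c - (p - y) = y - c := by abel
      simp only [hF, Set.indicator_apply, Set.mem_setOf_eq, hyc]
    calc ∫ y, Set.indicator {y : EuclideanSpace ℝ (Fin 2) | R < ‖y - c‖} (fun y => gδ (p - y)) y
        = ∫ y, F (p - c) (p - y) := by simp only [heq]
      _ = ∫ z, F (p - c) z := integral_sub_left_eq_self (F (p - c)) volume p
  -- rotational invariance
  have key : ∀ d d' : EuclideanSpace ℝ (Fin 2), ‖d‖ = ‖d'‖ → ∫ z, F d z = ∫ z, F d' z := by
    intro d d' hdd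
    rcases eq_or_ne d d' with rfl | hne
    · rfl
    · set O : EuclideanSpace ℝ (Fin 2) ≃ₗᵢ[ℝ] EuclideanSpace ℝ (Fin 2) := Submodule.reflection (ℝ ∙ (d - d'))ᗮ with hO
      have hOd : O d = d' := Submodule.reflection_sub hdd
      have hcomp : ∀ z : EuclideanSpace ℝ (Fin 2), F d' (O z) = F d z := by
        intro z
        have h1 : ‖d' - O z‖ = ‖d - z‖ := by rw [← hOd, ← map_sub, O.norm_map]
        have h2 : gδ (O z) = gδ z := by rw [hrad (O z), O.norm_map, ← hrad z]
        simp only [hF, Set.indicator_apply, Set.mem_setOf_eq, h1, h2]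
      calc ∫ z, F d z = ∫ z, F d' (O z) := by simp only [hcomp]
        _ = ∫ z, F d' z :=
          O.measurePreserving.integral_comp O.toHomeomorph.measurableEmbedding (F d')
  -- monotonicity along a fixed direction
  set e : EuclideanSpace ℝ (Fin 2) := EuclideanSpace.single (0 : Fin 2) (1 : ℝ) with he
  have hne : ‖e‖ = 1 := by rw [he, EuclideanSpace.norm_single]; norm_num
  have hre : ∀ r : ℝ, 0 ≤ r → ‖r • e‖ = r := by
    intro r hr; rw [norm_smul, hne, mul_one, Real.norm_eq_abs, abs_of_nonneg hr]
  have mono : ∀ r₁ r₂ : ℝ, 0 ≤ r₁ → r₁ ≤ r₂ → ∫ z, F (r₁ • e) z ≤ ∫ z, F (r₂ • e) z := by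
    intro r₁ r₂ hr1 hr12
    refine integral_mono (hFint _) (hFint _) ?_
    intro z
    simp only [hF, Set.indicator_apply, Set.mem_setOf_eq]
    by_cases h1 : R < ‖r₁ • e - z‖
    · by_cases hz : gδ z = 0
      · simp [hz]
      · have hzn : ‖z‖ < δ / 2 := lt_of_not_ge fun hh => hz (hsupp z hh)
        have hzR : ‖z‖ < R := hzn.trans hRδ
        have h2 : R < ‖r₂ • e - z‖ := by
          set t : ℝ := inner ℝ e z with ht
          have habs : |t| ≤ ‖z‖ := by
            calc |t| ≤ ‖e‖ * ‖z‖ := abs_real_inner_le_norm e z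
              _ = ‖z‖ := by rw [hne, one_mul]
          have hnr : ∀ r : ℝ, 0 ≤ r → ‖r • e - z‖ ^ 2 = r ^ 2 - 2 * r * t + ‖z‖ ^ 2 := by
            intro r hr
            rw [norm_sub_sq_real, hre r hr, real_inner_smul_left, ← ht]
            ring
          have hq1 : R ^ 2 < r₁ ^ 2 - 2 * r₁ * t + ‖z‖ ^ 2 := by
            rw [← hnr r₁ hr1]
            exact pow_lt_pow_left₀ h1 hR.le two_ne_zero
          have hq2 : R ^ 2 < r₂ ^ 2 - 2 * r₂ * t + ‖z‖ ^ 2 := by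
            rcases le_or_gt (2 * t) (r₁ + r₂) with hc | hc
            · nlinarith [mul_nonneg (sub_nonneg.2 hr12) (by linarith : (0:ℝ) ≤ r₁ + r₂ - 2 * t)]
            · exfalso
              have ht0 : r₁ - 2 * t < 0 := by linarith
              have : r₁ * (r₁ - 2 * t) ≤ 0 := mul_nonpos_of_nonneg_of_nonpos hr1 ht0.le
              nlinarith [norm_nonneg z]
          refine lt_of_pow_lt_pow_left₀ 2 (norm_nonneg (r₂ • e - z)) ?_
          rw [hnr r₂ (hr1.trans hr12)]
          exact hq2
        simp [h1, h2]
    · rw [if_neg h1, hrad z]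
      split_ifs with h2
      · exact hh0 _
      · exact le_rfl
  refine ⟨?_, ?_, ?_, ?_⟩
  · intro p q hpq
    rw [hβ p, hβ q]
    exact key _ _ hpq
  · intro p q hpq
    rw [hβ p, hβ q]
    calc ∫ z, F (p - c) z = ∫ z, F (‖p - c‖ • e) z :=
          key _ _ (by rw [hre _ (norm_nonneg _)])
      _ ≤ ∫ z, F (‖q - c‖ • e) z := mono _ _ (norm_nonneg _) hpq
      _ = ∫ z, F (q - c) z := key _ _ (by rw [hre _ (norm_nonneg _)])
  · intro p hp
    rw [hβ p]
    have hz : ∀ z : EuclideanSpace ℝ (Fin 2), F (p - c) z = 0 := by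
      intro z
      simp only [hF, Set.indicator_apply, Set.mem_setOf_eq]
      split_ifs with hm
      · refine hsupp z ?_
        have h1 : ‖p - c - z‖ ≤ ‖p - c‖ + ‖z‖ := norm_sub_le _ _
        linarith
      · rfl
    simp only [hz, integral_zero]
  · intro p hp
    rw [hβ p]
    have hz : ∀ z : EuclideanSpace ℝ (Fin 2), F (p - c) z = gδ z := by
      intro z
      simp only [hF, Set.indicator_apply, Set.mem_setOf_eq]
      split_ifs with hm
      · rfl
      · by_cases hz0 : gδ z = 0
        · rw [hz0]
        · exfalso
          have hzn : ‖z‖ < δ / 2 := lt_of_not_ge fun hh => hz0 (hsupp z hh)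
          have h1 : ‖p - c‖ - ‖z‖ ≤ ‖p - c - z‖ := norm_sub_norm_le _ _
          exact hm (by linarith)
    calc ∫ z, F (p - c) z = ∫ z, gδ z := by simp only [hz]
      _ = 1 := hg1
end
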